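/- Fix m ∈ ℕ, a Boolean function g : ((Fin m) → ZMod 2) → ZMod 2 with at most s nonzero Fourier coefficients, and θ > 0. Let W_g(u,v) = 2^{−m}·ĝ(u+v), and let W^θ be the matrix obtained by replacing every entry of W_g of absolute value strictly smaller than θ by zero (W^θ(u,v) = W_g(u,v) if |W_g(u,v)| ≥ θ, and 0 otherwise). Then both W^θ and W_g − W^θ have at most s nonzero entries in every row and every column, every entry of W_g − W^θ has absolute value strictly smaller than θ, and the ℓ²→ℓ² operator norm satisfies ‖W_g − W^θ‖ ≤ s·θ. -/

import Mathlib

/-- `(−1)^b` for `b : ZMod 2`, as a complex number. -/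
noncomputable def negOnePow (b : ZMod 2) : ℂ := if b = 0 then 1 else -1

/-- Mod-2 inner product of two bit strings. -/
def dotp {m : ℕ} (u x : Fin m → ZMod 2) : ZMod 2 := ∑ i, u i * x i

/-- The Fourier coefficient `ĝ(w) = Σ_x (−1)^{⟨w,x⟩ + g(x)}` of a Boolean function. -/
noncomputable def boolFourier {m : ℕ} (g : (Fin m → ZMod 2) → ZMod 2)
    (w : Fin m → ZMod 2) : ℂ :=
  ∑ x, negOnePow (dotp w x + g x)

/-- Schur test (special symmetric-bound form): if every row and column absolute sum of `A`
is at most `C`, then the ℓ²→ℓ² operator norm of `A` is at most `C`. -/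
lemma schur_test {n : Type*} [Fintype n] [DecidableEq n] (A : Matrix n n ℂ) (C : ℝ)
    (hC : 0 ≤ C)
    (hrow : ∀ u, ∑ v, ‖A u v‖ ≤ C)
    (hcol : ∀ v, ∑ u, ‖A u v‖ ≤ C) :
    ‖Matrix.toEuclideanCLM (𝕜 := ℂ) A‖ ≤ C := by
  apply ContinuousLinearMap.opNorm_le_bound _ hC
  intro x
  have key : ∀ u, ‖(Matrix.toEuclideanCLM (𝕜 := ℂ) A x) u‖ ^ 2 ≤
      C * ∑ v, ‖A u v‖ * ‖x v‖ ^ 2 := by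
    intro u
    have h1 : ‖(Matrix.toEuclideanCLM (𝕜 := ℂ) A x) u‖ ≤ ∑ v, ‖A u v‖ * ‖x v‖ := by
      show ‖∑ v, A u v * x v‖ ≤ _
      refine (norm_sum_le _ _).trans ?_
      simp
    have h2 : (∑ v, ‖A u v‖ * ‖x v‖) ^ 2 ≤
        (∑ v, ‖A u v‖) * ∑ v, ‖A u v‖ * ‖x v‖ ^ 2 := by
      refine Finset.sum_sq_le_sum_mul_sum_of_sq_eq_mul _ (fun v _ => ?_) (fun v _ => ?_)
        (fun v _ => ?_)
      · exact norm_nonneg _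
      · positivity
      · ring
    calc ‖(Matrix.toEuclideanCLM (𝕜 := ℂ) A x) u‖ ^ 2
        ≤ (∑ v, ‖A u v‖ * ‖x v‖) ^ 2 :=
          pow_le_pow_left₀ (norm_nonneg _) h1 2
      _ ≤ (∑ v, ‖A u v‖) * ∑ v, ‖A u v‖ * ‖x v‖ ^ 2 := h2
      _ ≤ C * ∑ v, ‖A u v‖ * ‖x v‖ ^ 2 := by
          apply mul_le_mul_of_nonneg_right (hrow u)
          positivity
  have hsum : ∑ u, ‖(Matrix.toEuclideanCLM (𝕜 := ℂ) A x) u‖ ^ 2 ≤ C ^ 2 * ∑ v, ‖x v‖ ^ 2 := by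
    calc ∑ u, ‖(Matrix.toEuclideanCLM (𝕜 := ℂ) A x) u‖ ^ 2
        ≤ ∑ u, C * ∑ v, ‖A u v‖ * ‖x v‖ ^ 2 := Finset.sum_le_sum fun u _ => key u
      _ = C * ∑ v, (∑ u, ‖A u v‖) * ‖x v‖ ^ 2 := by
          rw [← Finset.mul_sum, Finset.sum_comm]
          simp_rw [Finset.sum_mul]
      _ ≤ C * ∑ v, C * ‖x v‖ ^ 2 := by
          apply mul_le_mul_of_nonneg_left _ hC
          exact Finset.sum_le_sum fun v _ => mul_le_mul_of_nonneg_right (hcol v) (by positivity)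
      _ = C ^ 2 * ∑ v, ‖x v‖ ^ 2 := by rw [← Finset.mul_sum]; ring
  rw [EuclideanSpace.norm_eq, EuclideanSpace.norm_eq]
  rw [show ∀ y : ℝ, C * Real.sqrt y = Real.sqrt (C ^ 2 * y) from fun y => by
    rw [Real.sqrt_mul (sq_nonneg C), Real.sqrt_sq hC]]
  apply Real.sqrt_le_sqrt
  simpa using hsum

/-- A matrix whose row `u` vanishes wherever `ĝ(u+·)` does is `s`-row-sparse. -/
lemma row_sparse {m s : ℕ} (g : (Fin m → ZMod 2) → ZMod 2)
    (hs : {w | boolFourier g w ≠ 0}.ncard ≤ s)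
    (A : Matrix (Fin m → ZMod 2) (Fin m → ZMod 2) ℂ) (u : Fin m → ZMod 2)
    (h : ∀ v, boolFourier g (u + v) = 0 → A u v = 0) :
    {v | A u v ≠ 0}.ncard ≤ s := by
  have hZ : ∀ a : ZMod 2, a + a = 0 := by decide
  have hsub : {v | A u v ≠ 0} ⊆ (fun w => u + w) '' {w | boolFourier g w ≠ 0} := by
    intro v hv
    refine ⟨u + v, fun h0 => hv (h v h0), ?_⟩
    show u + (u + v) = v
    rw [← add_assoc, show u + u = 0 from funext fun i => hZ (u i), zero_add]
  calc {v | A u v ≠ 0}.ncard ≤ ((fun w => u + w) '' {w | boolFourier g w ≠ 0}).ncard :=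
        Set.ncard_le_ncard hsub (Set.toFinite _)
    _ = {w | boolFourier g w ≠ 0}.ncard :=
        Set.ncard_image_of_injective _ (add_right_injective u)
    _ ≤ s := hs

/-- A sparse-row, small-entry bound on the absolute row sum. -/
lemma row_sum_le {n : Type*} [Fintype n] [DecidableEq n] {s : ℕ} {θ : ℝ} (hθ : 0 ≤ θ)
    (f : n → ℂ) (hcard : {v | f v ≠ 0}.ncard ≤ s) (hsmall : ∀ v, ‖f v‖ < θ) :
    ∑ v, ‖f v‖ ≤ s * θ := by
  classical
  rw [← Finset.sum_filter_of_ne (p := fun v => f v ≠ 0)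
    (fun v _ h hf => h (by simp [hf]))]
  have h2 : (Finset.univ.filter (fun v => f v ≠ 0)).card ≤ s := by
    rwa [← Set.toFinset_setOf, ← Set.ncard_eq_toFinset_card']
  calc ∑ v ∈ Finset.univ.filter (fun v => f v ≠ 0), ‖f v‖
      ≤ ∑ _v ∈ Finset.univ.filter (fun v => f v ≠ 0), θ :=
        Finset.sum_le_sum fun v _ => (hsmall v).le
    _ = (Finset.univ.filter (fun v => f v ≠ 0)).card * θ := by
        rw [Finset.sum_const, nsmul_eq_mul]
    _ ≤ s * θ := mul_le_mul_of_nonneg_right (Nat.cast_le.2 h2) hθ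

/-- For a Boolean function `g` with at most `s` nonzero Fourier coefficients, the entrywise
`θ`-truncation `W^θ` of `W_g` and the difference `W_g − W^θ` are both `s`-sparse in every
row and column, the difference has entries of absolute value `< θ`, and the difference has
ℓ²→ℓ² operator norm at most `s·θ` (core of the paper's Lemma 6). -/
theorem truncation_of_sparse_Wg (m s : ℕ) (g : (Fin m → ZMod 2) → ZMod 2)
    (hs : {w | boolFourier g w ≠ 0}.ncard ≤ s)
    (θ : ℝ) (hθ : 0 < θ)
    (W Wθ : Matrix (Fin m → ZMod 2) (Fin m → ZMod 2) ℂ)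
    (hW : ∀ u v, W u v = ((2 : ℂ) ^ m)⁻¹ * boolFourier g (u + v))
    (hWθ : ∀ u v, Wθ u v = if θ ≤ ‖W u v‖ then W u v else 0) :
    (∀ u, {v | Wθ u v ≠ 0}.ncard ≤ s) ∧ (∀ v, {u | Wθ u v ≠ 0}.ncard ≤ s) ∧
    (∀ u, {v | (W - Wθ) u v ≠ 0}.ncard ≤ s) ∧ (∀ v, {u | (W - Wθ) u v ≠ 0}.ncard ≤ s) ∧
    (∀ u v, ‖(W - Wθ) u v‖ < θ) ∧
    ‖Matrix.toEuclideanCLM (𝕜 := ℂ) (W - Wθ)‖ ≤ s * θ := by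
  classical
  -- if the Fourier coefficient vanishes, all relevant entries vanish
  have hW0 : ∀ u v, boolFourier g (u + v) = 0 → W u v = 0 := by
    intro u v h0; rw [hW, h0, mul_zero]
  have hWθ0 : ∀ u v, boolFourier g (u + v) = 0 → Wθ u v = 0 := by
    intro u v h0
    rw [hWθ, hW0 u v h0]
    simp [not_le.2 hθ]
  have hD0 : ∀ u v, boolFourier g (u + v) = 0 → (W - Wθ) u v = 0 := by
    intro u v h0
    simp [Matrix.sub_apply, hW0 u v h0, hWθ0 u v h0]
  -- symmetry of the support condition: boolFourier g (u+v) = boolFourier g (v+u)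
  have hcomm : ∀ u v : Fin m → ZMod 2, u + v = v + u := fun u v => add_comm u v
  -- column sparsity via transposed use of row_sparse
  have hcolW : ∀ (A : Matrix (Fin m → ZMod 2) (Fin m → ZMod 2) ℂ),
      (∀ u v, boolFourier g (u + v) = 0 → A u v = 0) →
      ∀ v, {u | A u v ≠ 0}.ncard ≤ s := by
    intro A hA v
    exact row_sparse g hs (Matrix.transpose A) v
      (fun u h0 => hA u v (by rwa [hcomm u v]))
  have hrowW : ∀ (A : Matrix (Fin m → ZMod 2) (Fin m → ZMod 2) ℂ),
      (∀ u v, boolFourier g (u + v) = 0 → A u v = 0) →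
      ∀ u, {v | A u v ≠ 0}.ncard ≤ s := by
    intro A hA u
    exact row_sparse g hs A u (hA u)
  -- entry bound on the difference
  have hsmall : ∀ u v, ‖(W - Wθ) u v‖ < θ := by
    intro u v
    rw [Matrix.sub_apply, hWθ]
    split
    · simpa using hθ
    · next h => simpa using not_le.1 h
  refine ⟨hrowW Wθ hWθ0, hcolW Wθ hWθ0, hrowW _ hD0, hcolW _ hD0, hsmall, ?_⟩
  refine schur_test _ _ (by positivity) (fun u => ?_) (fun v => ?_)
  · exact row_sum_le hθ.le _ (hrowW _ hD0 u) (hsmall u)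
  · exact row_sum_le hθ.le _ (hcolW _ hD0 v) (fun u => hsmall u v)
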